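/- The raising operator e_i and the lowering operator f_i on diagrams are partial inverses: for diagrams D, D' with at most n rows and 1 ≤ i < n, e_i(D) = D' with D' ≠ 0 if and only if f_i(D') = D. -/
import Mathlib


open scoped Classical

/-- A Kohnert move: take the rightmost cell of row `r` and move it down in its
column to the highest open row `r'` below (rows indexed from 1). Cells are `(row, column)`. -/
def KohnertMove (D D' : Finset (ℕ × ℕ)) : Prop :=
  ∃ r c r', (r, c) ∈ D ∧ (∀ c', (r, c') ∈ D → c' ≤ c) ∧
    1 ≤ r' ∧ r' < r ∧ (r', c) ∉ D ∧ (∀ r'', r' < r'' → r'' < r → (r'', c) ∈ D) ∧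
    D' = insert (r', c) (D.erase (r, c))

/-- The largest part of a weak composition. -/
def maxPart (a : List ℕ) : ℕ := a.foldr max 0

/-- Number of cells of a diagram in row `i`. -/
def rowWeight (D : Finset (ℕ × ℕ)) (i : ℕ) : ℕ :=
  (D.filter (fun p => p.1 = i)).card

/-- The weight of a diagram, as a finitely supported function recording the
number of cells in each row. -/
noncomputable def wtF (D : Finset (ℕ × ℕ)) : ℕ →₀ ℕ := ∑ p ∈ D, Finsupp.single p.1 1

/-- The exponent vector `x^a` of a weak composition `a` (1-based variables). -/
noncomputable def compFinsupp (a : List ℕ) : ℕ →₀ ℕ :=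
  ∑ i ∈ Finset.range a.length, Finsupp.single (i + 1) (a.getD i 0)

/-- The boxes matched by a partial matching. -/
def matchedBoxes (M : Finset ((ℕ × ℕ) × (ℕ × ℕ))) : Finset (ℕ × ℕ) :=
  M.image Prod.fst ∪ M.image Prod.snd

/-- Initial vertical `i`-pairing: pair any boxes of rows `i` and `i+1` in the
same column. -/
def vInit (i : ℕ) (D : Finset (ℕ × ℕ)) : Finset ((ℕ × ℕ) × (ℕ × ℕ)) :=
  (D.filter (fun p => p.1 = i + 1 ∧ (i, p.2) ∈ D)).image (fun p => (p, (i, p.2)))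

/-- One step of the iterative vertical `i`-pairing: pair an unpaired box of row
`i+1` with the rightmost unpaired box of row `i` in a column to its left,
provided all boxes of rows `i`, `i+1` in the columns strictly between them are
already paired. -/
def VStep (i : ℕ) (D : Finset (ℕ × ℕ)) (M M' : Finset ((ℕ × ℕ) × (ℕ × ℕ))) : Prop :=
  ∃ cx cy, (i + 1, cx) ∈ D ∧ (i, cy) ∈ D ∧ cy < cx ∧
    (i + 1, cx) ∉ matchedBoxes M ∧ (i, cy) ∉ matchedBoxes M ∧
    (∀ p ∈ D, (p.1 = i ∨ p.1 = i + 1) → cy < p.2 → p.2 < cx → p ∈ matchedBoxes M) ∧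
    M' = insert ((i + 1, cx), (i, cy)) M

/-- The vertical `i`-pairing of `D`: a matching obtained from the same-column
pairing by iterating `VStep` until no further step applies. -/
def VOutcome (i : ℕ) (D : Finset (ℕ × ℕ)) (M : Finset ((ℕ × ℕ) × (ℕ × ℕ))) : Prop :=
  Relation.ReflTransGen (VStep i D) (vInit i D) M ∧ ∀ M', ¬ VStep i D M M'

/-- The raising operator `e_i` as a relation: `RaiseRel i D D'` holds when `D'`
is obtained from `D` by pushing the rightmost vertically unpaired box of row
`i+1` down to row `i` (`e_i(D) = 0` corresponds to no `D'` existing). -/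
def RaiseRel (i : ℕ) (D D' : Finset (ℕ × ℕ)) : Prop :=
  ∃ M c, VOutcome i D M ∧ (i + 1, c) ∈ D ∧ (i + 1, c) ∉ matchedBoxes M ∧
    (∀ c', (i + 1, c') ∈ D → (i + 1, c') ∉ matchedBoxes M → c' ≤ c) ∧
    D' = insert (i, c) (D.erase (i + 1, c))

/-- The lowering operator `f_i` as a relation: `LowerRel i D D'` holds when `D'`
is obtained from `D` by pushing the leftmost vertically unpaired box of row `i`
up to row `i+1`. -/
def LowerRel (i : ℕ) (D D' : Finset (ℕ × ℕ)) : Prop :=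
  ∃ M c, VOutcome i D M ∧ (i, c) ∈ D ∧ (i, c) ∉ matchedBoxes M ∧
    (∀ c', (i, c') ∈ D → (i, c') ∉ matchedBoxes M → c ≤ c') ∧
    D' = insert (i + 1, c) (D.erase (i, c))

lemma pair_ne_up {i b c : ℕ} : ((i + 1 : ℕ), b) ≠ ((i : ℕ), c) := by
  simp only [ne_eq, Prod.mk.injEq, not_and]; omega

lemma pair_ne_down {i b c : ℕ} : ((i : ℕ), b) ≠ ((i + 1 : ℕ), c) := by
  simp only [ne_eq, Prod.mk.injEq, not_and]; omega

lemma ne_of_snd_ne {a b : ℕ} {r s : ℕ} (h : a ≠ b) : ((r, a) : ℕ × ℕ) ≠ (s, b) := by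
  simp only [ne_eq, Prod.mk.injEq, not_and]; exact fun _ => h

lemma mem_matchedBoxes {M : Finset ((ℕ × ℕ) × (ℕ × ℕ))} {q : ℕ × ℕ} :
    q ∈ matchedBoxes M ↔ ∃ pr ∈ M, pr.1 = q ∨ pr.2 = q := by
  simp only [matchedBoxes, Finset.mem_union, Finset.mem_image]
  aesop

lemma matchedBoxes_mono {M M' : Finset ((ℕ × ℕ) × (ℕ × ℕ))} (h : M ⊆ M') :
    matchedBoxes M ⊆ matchedBoxes M' :=
  Finset.union_subset_union (Finset.image_subset_image h) (Finset.image_subset_image h)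

lemma mem_vInit {i : ℕ} {S : Finset (ℕ × ℕ)} {pr : (ℕ × ℕ) × (ℕ × ℕ)} :
    pr ∈ vInit i S ↔ ∃ b, (i + 1, b) ∈ S ∧ (i, b) ∈ S ∧ pr = ((i + 1, b), (i, b)) := by
  simp only [vInit, Finset.mem_image, Finset.mem_filter]
  constructor
  · rintro ⟨⟨a, b⟩, ⟨h1, h2, h3⟩, rfl⟩
    simp only at h2 h3 ⊢
    subst h2
    exact ⟨b, h1, h3, rfl⟩
  · rintro ⟨b, h1, h2, rfl⟩
    exact ⟨(i + 1, b), ⟨h1, rfl, h2⟩, rfl⟩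

lemma vInit_mem_matched {i c : ℕ} {D : Finset (ℕ × ℕ)}
    (h1 : (i + 1, c) ∈ D) (h0 : (i, c) ∈ D) :
    (i + 1, c) ∈ matchedBoxes (vInit i D) ∧ (i, c) ∈ matchedBoxes (vInit i D) := by
  constructor <;> rw [mem_matchedBoxes] <;>
    exact ⟨((i + 1, c), (i, c)), mem_vInit.2 ⟨c, h1, h0, rfl⟩, by simp⟩

lemma matchedBoxes_reach_mono {i : ℕ} {D : Finset (ℕ × ℕ)} {M₀ M : Finset ((ℕ × ℕ) × (ℕ × ℕ))}
    (h : Relation.ReflTransGen (VStep i D) M₀ M) : matchedBoxes M₀ ⊆ matchedBoxes M := by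
  induction h with
  | refl => exact subset_rfl
  | tail h1 h2 ih =>
    obtain ⟨cx, cy, _, _, _, _, _, _, rfl⟩ := h2
    exact ih.trans (matchedBoxes_mono (Finset.subset_insert _ _))

lemma reach_boxes {i : ℕ} {D : Finset (ℕ × ℕ)} {M : Finset ((ℕ × ℕ) × (ℕ × ℕ))}
    (h : Relation.ReflTransGen (VStep i D) (vInit i D) M) :
    ∀ q ∈ matchedBoxes M, q ∈ D ∧ (q.1 = i ∨ q.1 = i + 1) := by
  induction h with
  | refl =>
    intro q hq
    rw [mem_matchedBoxes] at hq
    obtain ⟨pr, hpr, hq⟩ := hq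
    obtain ⟨b, hb1, hb0, rfl⟩ := mem_vInit.1 hpr
    rcases hq with rfl | rfl
    · exact ⟨hb1, Or.inr rfl⟩
    · exact ⟨hb0, Or.inl rfl⟩
  | tail h1 h2 ih =>
    obtain ⟨cx, cy, hx, hy, _, _, _, _, rfl⟩ := h2
    intro q hq
    rw [mem_matchedBoxes] at hq
    obtain ⟨pr, hpr, hq⟩ := hq
    rcases Finset.mem_insert.1 hpr with rfl | hpr
    · rcases hq with rfl | rfl
      · exact ⟨hx, Or.inr rfl⟩
      · exact ⟨hy, Or.inl rfl⟩
    · exact ih q (mem_matchedBoxes.2 ⟨pr, hpr, hq⟩)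

lemma no_cross {i : ℕ} {D : Finset (ℕ × ℕ)} {M : Finset ((ℕ × ℕ) × (ℕ × ℕ))}
    (hout : VOutcome i D M) :
    ∀ cy cx, cy < cx → (i, cy) ∈ D → (i + 1, cx) ∈ D →
      (i, cy) ∉ matchedBoxes M → (i + 1, cx) ∉ matchedBoxes M → False := by
  have key : ∀ k cy cx, cx - cy ≤ k → cy < cx → (i, cy) ∈ D → (i + 1, cx) ∈ D →
      (i, cy) ∉ matchedBoxes M → (i + 1, cx) ∉ matchedBoxes M → False := by
    intro k
    induction k with
    | zero => intro cy cx h1 h2 _ _ _ _; omega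
    | succ k ih =>
      intro cy cx hk hlt hy hx hmy hmx
      by_cases hex : ∃ p ∈ D, ((p.1 = i ∨ p.1 = i + 1) ∧ cy < p.2 ∧ p.2 < cx) ∧
          p ∉ matchedBoxes M
      · obtain ⟨⟨a, b⟩, hp, ⟨hrow, hb1, hb2⟩, hm⟩ := hex
        simp only at hrow hb1 hb2
        rcases hrow with rfl | rfl
        · exact ih b cx (by omega) hb2 hp hx hm hmx
        · exact ih cy b (by omega) hb1 hy hp hmy hm
      · push_neg at hex
        exact hout.2 (insert ((i + 1, cx), (i, cy)) M)
          ⟨cx, cy, hx, hy, hlt, hmx, hmy,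
            fun p hp hr hh1 hh2 => hex p hp ⟨hr, hh1, hh2⟩, rfl⟩
  intro cy cx h1 h2 h3 h4 h5
  exact key (cx - cy) cy cx le_rfl h1 h2 h3 h4 h5

lemma reach_transfer {i c : ℕ} {D E : Finset (ℕ × ℕ)}
    (hagree : ∀ p : ℕ × ℕ, p ≠ (i, c) → p ≠ (i + 1, c) → (p ∈ D ↔ p ∈ E))
    (hDc : (i, c) ∈ D ∨ (i + 1, c) ∈ D)
    (hEc : (i, c) ∉ E ∨ (i + 1, c) ∉ E)
    {M : Finset ((ℕ × ℕ) × (ℕ × ℕ))}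
    (h : Relation.ReflTransGen (VStep i D) (vInit i D) M) :
    (i, c) ∉ matchedBoxes M → (i + 1, c) ∉ matchedBoxes M →
    Relation.ReflTransGen (VStep i E) (vInit i E) M := by
  induction h with
  | refl =>
    intro hic _
    have heq : vInit i E = vInit i D := by
      ext pr
      rw [mem_vInit, mem_vInit]
      constructor
      · rintro ⟨b, hE1, hE0, rfl⟩
        have hbc : b ≠ c := by rintro rfl; rcases hEc with h | h <;> [exact h hE0; exact h hE1]
        exact ⟨b, (hagree _ (ne_of_snd_ne hbc) (ne_of_snd_ne hbc)).mpr hE1,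
            (hagree _ (ne_of_snd_ne hbc) pair_ne_down).mpr hE0, rfl⟩
      · rintro ⟨b, hD1, hD0, rfl⟩
        have hbc : b ≠ c := by
          rintro rfl
          exact hic (vInit_mem_matched hD1 hD0).2
        exact ⟨b, (hagree _ (ne_of_snd_ne hbc) (ne_of_snd_ne hbc)).mp hD1,
            (hagree _ (ne_of_snd_ne hbc) pair_ne_down).mp hD0, rfl⟩
    rw [heq]
  | @tail M₁ M₂ h1 h2 ih =>
    intro hic hic1
    obtain ⟨cx, cy, hxD, hyD, hlt, hmx, hmy, hbet, rfl⟩ := h2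
    have hsub : matchedBoxes M₁ ⊆ matchedBoxes (insert ((i + 1, cx), (i, cy)) M₁) :=
      matchedBoxes_mono (Finset.subset_insert _ _)
    have hb := ih (fun h => hic (hsub h)) (fun h => hic1 (hsub h))
    have hxm : (i + 1, cx) ∈ matchedBoxes (insert ((i + 1, cx), (i, cy)) M₁) :=
      mem_matchedBoxes.2 ⟨((i + 1, cx), (i, cy)), Finset.mem_insert_self _ _, Or.inl rfl⟩
    have hym : (i, cy) ∈ matchedBoxes (insert ((i + 1, cx), (i, cy)) M₁) :=
      mem_matchedBoxes.2 ⟨((i + 1, cx), (i, cy)), Finset.mem_insert_self _ _, Or.inr rfl⟩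
    have hcx : cx ≠ c := by rintro rfl; exact hic1 hxm
    have hcy : cy ≠ c := by rintro rfl; exact hic hym
    have hnbet : ¬(cy < c ∧ c < cx) := by
      rintro ⟨hh1, hh2⟩
      rcases hDc with h | h
      · exact hic (hsub (hbet (i, c) h (Or.inl rfl) hh1 hh2))
      · exact hic1 (hsub (hbet (i + 1, c) h (Or.inr rfl) hh1 hh2))
    refine hb.tail ⟨cx, cy, (hagree _ pair_ne_up (ne_of_snd_ne hcx)).mp hxD,
      (hagree _ (ne_of_snd_ne hcy) pair_ne_down).mp hyD, hlt, hmx, hmy, ?_, rfl⟩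
    intro p hpE hrow hh1 hh2
    have hpc : p.2 ≠ c := fun h => hnbet (by omega)
    refine hbet p ((hagree p ?_ ?_).mpr hpE) hrow hh1 hh2
    · exact fun h => hpc (congrArg Prod.snd h)
    · exact fun h => hpc (congrArg Prod.snd h)

lemma maximal_transfer {i c : ℕ} {D E : Finset (ℕ × ℕ)} {M : Finset ((ℕ × ℕ) × (ℕ × ℕ))}
    (hagree : ∀ p : ℕ × ℕ, p ≠ (i, c) → p ≠ (i + 1, c) → (p ∈ D ↔ p ∈ E))
    (hEc2 : (i, c) ∈ E ∨ (i + 1, c) ∈ E)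
    (hmax : ∀ M', ¬ VStep i D M M')
    (hic : (i, c) ∉ matchedBoxes M) (hic1 : (i + 1, c) ∉ matchedBoxes M)
    (hstep1 : ∀ cy, cy < c → (i + 1, c) ∈ E → (i, cy) ∈ E → (i, cy) ∉ matchedBoxes M → False)
    (hstep2 : ∀ cx, c < cx → (i, c) ∈ E → (i + 1, cx) ∈ E → (i + 1, cx) ∉ matchedBoxes M → False) :
    ∀ M', ¬ VStep i E M M' := by
  rintro M' ⟨cx, cy, hxE, hyE, hlt, hmx, hmy, hbet, rfl⟩
  by_cases hcx : cx = c
  · subst hcx; exact hstep1 cy hlt hxE hyE hmy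
  by_cases hcy : cy = c
  · subst hcy; exact hstep2 cx hlt hyE hxE hmx
  by_cases hbetw : cy < c ∧ c < cx
  · rcases hEc2 with h | h
    · exact hic (hbet (i, c) h (Or.inl rfl) hbetw.1 hbetw.2)
    · exact hic1 (hbet (i + 1, c) h (Or.inr rfl) hbetw.1 hbetw.2)
  · refine hmax (insert ((i + 1, cx), (i, cy)) M)
      ⟨cx, cy, (hagree _ pair_ne_up (ne_of_snd_ne hcx)).mpr hxE,
        (hagree _ (ne_of_snd_ne hcy) pair_ne_down).mpr hyE, hlt, hmx, hmy, ?_, rfl⟩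
    intro p hpD hrow hh1 hh2
    have hpc : p.2 ≠ c := fun h => hbetw (by omega)
    exact hbet p ((hagree p (fun h => hpc (congrArg Prod.snd h))
      (fun h => hpc (congrArg Prod.snd h))).mp hpD) hrow hh1 hh2

/-- `e_i` and `f_i` are partial inverses: for diagrams with at most `n` rows and
`1 ≤ i < n`, `e_i(D) = D' ≠ 0` iff `f_i(D') = D`. -/
theorem raise_lower_partial_inverse (n i : ℕ) (h1 : 1 ≤ i) (h2 : i < n)
    (D D' : Finset (ℕ × ℕ)) (hD : ∀ p ∈ D, p.1 ≤ n) (hD' : ∀ p ∈ D', p.1 ≤ n) :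
    RaiseRel i D D' ↔ LowerRel i D' D := by
  constructor
  · rintro ⟨M, c, ⟨hreach, hmax⟩, hcD, hcm, hcmax, rfl⟩
    -- (i, c) ∉ D
    have hicD : (i, c) ∉ D := fun h =>
      hcm (matchedBoxes_reach_mono hreach (vInit_mem_matched hcD h).1)
    set E : Finset (ℕ × ℕ) := insert (i, c) (D.erase (i + 1, c)) with hE
    have hicE : (i, c) ∈ E := Finset.mem_insert_self _ _
    have h1cE : (i + 1, c) ∉ E := by
      simp only [hE, Finset.mem_insert, Finset.mem_erase]
      push_neg
      exact ⟨pair_ne_up, fun h => absurd rfl h⟩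
    have hagree : ∀ p : ℕ × ℕ, p ≠ (i, c) → p ≠ (i + 1, c) → (p ∈ D ↔ p ∈ E) := by
      intro p hp1 hp2
      simp only [hE, Finset.mem_insert, Finset.mem_erase, hp1, hp2, false_or, ne_eq,
        not_false_iff, true_and]
    have hicM : (i, c) ∉ matchedBoxes M := fun h => hicD (reach_boxes hreach _ h).1
    have hreach' := reach_transfer hagree (Or.inr hcD) (Or.inr h1cE) hreach hicM hcm
    have hmax' : ∀ M', ¬ VStep i E M M' := by
      refine maximal_transfer hagree (Or.inl hicE) hmax hicM hcm ?_ ?_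
      · intro cy _ hc _ _; exact h1cE hc
      · intro cx hlt _ hx hm
        have hxD : (i + 1, cx) ∈ D :=
          (hagree _ pair_ne_up (ne_of_snd_ne (by omega))).mpr hx
        exact absurd (hcmax cx hxD hm) (by omega)
    refine ⟨M, c, ⟨hreach', hmax'⟩, hicE, hicM, ?_, ?_⟩
    · intro c' hc' hm'
      by_contra hlt
      push_neg at hlt
      have hc'D : (i, c') ∈ D :=
        (hagree _ (ne_of_snd_ne (by omega)) pair_ne_down).mpr hc'
      exact no_cross ⟨hreach, hmax⟩ c' c hlt hc'D hcD hm' hcm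
    · have h1 : (i, c) ∉ D.erase (i + 1, c) := fun h => hicD (Finset.mem_erase.mp h).2
      rw [hE, Finset.erase_insert h1, Finset.insert_erase hcD]
  · rintro ⟨M, c, ⟨hreach, hmax⟩, hcD', hcm, hcmin, rfl⟩
    -- here the "D" of LowerRel is our D', and the produced set is D
    have h1cD' : (i + 1, c) ∉ D' := fun h =>
      hcm (matchedBoxes_reach_mono hreach (vInit_mem_matched h hcD').2)
    set E : Finset (ℕ × ℕ) := insert (i + 1, c) (D'.erase (i, c)) with hE
    have h1cE : (i + 1, c) ∈ E := Finset.mem_insert_self _ _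
    have hicE : (i, c) ∉ E := by
      simp only [hE, Finset.mem_insert, Finset.mem_erase]
      push_neg
      exact ⟨pair_ne_down, fun h => absurd rfl h⟩
    have hagree : ∀ p : ℕ × ℕ, p ≠ (i, c) → p ≠ (i + 1, c) → (p ∈ D' ↔ p ∈ E) := by
      intro p hp1 hp2
      simp only [hE, Finset.mem_insert, Finset.mem_erase, hp1, hp2, false_or, ne_eq,
        not_false_iff, true_and]
    have h1cM : (i + 1, c) ∉ matchedBoxes M := fun h => h1cD' (reach_boxes hreach _ h).1
    have hreach' := reach_transfer hagree (Or.inl hcD') (Or.inl hicE) hreach hcm h1cM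
    have hmax' : ∀ M', ¬ VStep i E M M' := by
      refine maximal_transfer hagree (Or.inr h1cE) hmax hcm h1cM ?_ ?_
      · intro cy hlt _ hy hm
        have hyD' : (i, cy) ∈ D' :=
          (hagree _ (ne_of_snd_ne (by omega)) pair_ne_down).mpr hy
        exact absurd (hcmin cy hyD' hm) (by omega)
      · intro cx _ hc _ _; exact hicE hc
    refine ⟨M, c, ⟨hreach', hmax'⟩, h1cE, h1cM, ?_, ?_⟩
    · intro c' hc' hm'
      by_contra hlt
      push_neg at hlt
      have hc'D' : (i + 1, c') ∈ D' :=
        (hagree _ pair_ne_up (ne_of_snd_ne (by omega))).mpr hc'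
      exact no_cross ⟨hreach, hmax⟩ c c' hlt hcD' hc'D' hcm hm'
    · have h1 : (i + 1, c) ∉ D'.erase (i, c) := fun h => h1cD' (Finset.mem_erase.mp h).2
      rw [hE, Finset.erase_insert h1, Finset.insert_erase hcD']
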